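/- Under the 1-D Fanno system, the Bernoulli quantity E = u²/2 + γp/((γ−1)ρ) satisfies E' = −μu², and moreover −μu² = −(2μ(γ−1)M²/((γ−1)M²+2))·E, i.e. E' = −2μ(γ−1)M² E/((γ−1)M²+2). -/

import Mathlib

theorem fanno_bernoulli_ode
    (γ μ L : ℝ) (hγ : 1 < γ) (hμ : 0 < μ)
    (ρ u p ρ' u' p' : ℝ → ℝ)
    (hρpos : ∀ x ∈ Set.Icc 0 L, 0 < ρ x)
    (hupos : ∀ x ∈ Set.Icc 0 L, 0 < u x)
    (hppos : ∀ x ∈ Set.Icc 0 L, 0 < p x)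
    (hρ : ∀ x ∈ Set.Icc 0 L, HasDerivAt ρ (ρ' x) x)
    (hu : ∀ x ∈ Set.Icc 0 L, HasDerivAt u (u' x) x)
    (hp : ∀ x ∈ Set.Icc 0 L, HasDerivAt p (p' x) x)
    (hmass : ∀ x ∈ Set.Icc 0 L, HasDerivAt (fun y => ρ y * u y) 0 x)
    (hmom : ∀ x ∈ Set.Icc 0 L,
      HasDerivAt (fun y => ρ y * (u y) ^ 2 + p y) (-(μ * ρ x * (u x) ^ 2)) x)
    (hener : ∀ x ∈ Set.Icc 0 L,
      HasDerivAt (fun y => ρ y * ((u y) ^ 2 / 2 + γ * p y / ((γ - 1) * ρ y)) * u y)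
        (-(μ * ρ x * (u x) ^ 3)) x) :
    ∀ x ∈ Set.Icc 0 L,
      HasDerivAt (fun y => (u y) ^ 2 / 2 + γ * p y / ((γ - 1) * ρ y))
        (-(μ * (u x) ^ 2)) x ∧
      -(μ * (u x) ^ 2) =
        -(2 * μ * (γ - 1) * (ρ x * (u x) ^ 2 / (γ * p x)) /
            ((γ - 1) * (ρ x * (u x) ^ 2 / (γ * p x)) + 2)) *
          ((u x) ^ 2 / 2 + γ * p x / ((γ - 1) * ρ x)) := by
  intro x hx
  have ha := hρpos x hx
  have hb := hupos x hx
  have hc := hppos x hx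
  have hγ1 : γ - 1 ≠ 0 := by linarith
  have hγ0 : γ ≠ 0 := by linarith
  have ha0 : ρ x ≠ 0 := ne_of_gt ha
  have hb0 : u x ≠ 0 := ne_of_gt hb
  have hc0 : p x ≠ 0 := ne_of_gt hc
  have hden : (γ - 1) * ρ x ≠ 0 := mul_ne_zero hγ1 ha0
  -- derivative of E
  set e' : ℝ := u x * u' x +
      (γ * p' x * ((γ - 1) * ρ x) - γ * p x * ((γ - 1) * ρ' x)) / ((γ - 1) * ρ x) ^ 2
    with he'
  have hE : HasDerivAt (fun y => (u y) ^ 2 / 2 + γ * p y / ((γ - 1) * ρ y)) e' x := by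
    have h1 : HasDerivAt (fun y => (u y) ^ 2 / 2) (u x * u' x) x := by
      have := ((hu x hx).fun_pow 2).div_const 2
      refine this.congr_deriv ?_
      ring
    have h2 : HasDerivAt (fun y => γ * p y / ((γ - 1) * ρ y))
        ((γ * p' x * ((γ - 1) * ρ x) - γ * p x * ((γ - 1) * ρ' x)) / ((γ - 1) * ρ x) ^ 2) x :=
      (((hp x hx).const_mul γ).div ((hρ x hx).const_mul (γ - 1)) hden)
    exact h1.add h2
  -- product (ρu)·E
  have hprod : HasDerivAt
      (fun y => (ρ y * u y) * ((u y) ^ 2 / 2 + γ * p y / ((γ - 1) * ρ y)))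
      (0 * ((u x) ^ 2 / 2 + γ * p x / ((γ - 1) * ρ x)) + (ρ x * u x) * e') x :=
    (hmass x hx).mul hE
  have hener' : HasDerivAt
      (fun y => (ρ y * u y) * ((u y) ^ 2 / 2 + γ * p y / ((γ - 1) * ρ y)))
      (-(μ * ρ x * (u x) ^ 3)) x := by
    have := hener x hx
    convert this using 2 with y
    ring
  have huniq := hprod.unique hener'
  have he : e' = -(μ * (u x) ^ 2) := by
    have hab : ρ x * u x ≠ 0 := mul_ne_zero ha0 hb0
    field_simp at huniq
    have : ρ x * u x * e' = ρ x * u x * (-(μ * (u x) ^ 2)) := by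
      apply mul_left_cancel₀ (mul_ne_zero two_ne_zero hden); linear_combination huniq
    exact mul_left_cancel₀ hab this
  constructor
  · rw [← he]; exact hE
  · have hM : (γ - 1) * (ρ x * (u x) ^ 2) + 2 * (γ * p x) ≠ 0 := by
      have h1 : 0 < (γ - 1) * (ρ x * (u x) ^ 2) := by
        apply mul_pos (by linarith); positivity
      have h2 : 0 < 2 * (γ * p x) := by positivity
      linarith
    have key : (γ - 1) * (ρ x * (u x) ^ 2 / (γ * p x)) + 2
        = ((γ - 1) * (ρ x * (u x) ^ 2) + 2 * (γ * p x)) / (γ * p x) := by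
      field_simp
    rw [key]
    field_simp
    rw [div_self (by convert hM using 1; ring)]
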